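/- Let K be an algebraically closed field of characteristic 2 and μ ∈ K∖{0,1}. For Λ₃'(μ) (relations α² = σγ, μβ² = γσ, γα = βγ, σβ = ασ), let √μ denote the square root of μ in K. Then the element α + √μ·β satisfies (α + √μ·β)² ∈ K(Λ₃'(μ)), i.e. α + √μ·β ∈ T₁(Λ₃'(μ)), where K(Λ₃'(μ)) = span{σ, γ, ασ, γα, γσ − σγ, γσβ − σβγ}. -/

import Mathlib

set_option maxHeartbeats 4000000 in
/-- In `Λ₃'(μ)` (char 2, `μ ∉ {0,1}`), the element `α + √μ·β` squares into the
commutator subspace `K(Λ₃'(μ)) = span{σ, γ, ασ, γα, γσ − σγ, γσβ − σβγ}`,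
i.e. `α + √μ·β ∈ T₁(Λ₃'(μ))`. -/
theorem sqrt_element_in_T1_of_Lambda3'
    (K : Type*) [Field K] [IsAlgClosed K] [CharP K 2]
    (μ : K) (hμ0 : μ ≠ 0) (hμ1 : μ ≠ 1)
    (Λ : Type*) [Ring Λ] [Algebra K Λ]
    (e1 e2 α β σ γ : Λ)
    (he1 : e1 * e1 = e1) (he2 : e2 * e2 = e2)
    (h12 : e1 * e2 = 0) (h21 : e2 * e1 = 0) (hsum : e1 + e2 = 1)
    (hα1 : e1 * α = α) (hα2 : α * e1 = α)
    (hβ1 : e2 * β = β) (hβ2 : β * e2 = β)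
    (hσ1 : e1 * σ = σ) (hσ2 : σ * e2 = σ)
    (hγ1 : e2 * γ = γ) (hγ2 : γ * e1 = γ)
    (r1 : α ^ 2 = σ * γ) (r2 : μ • β ^ 2 = γ * σ)
    (r3 : γ * α = β * γ) (r4 : σ * β = α * σ)
    -- the twelve basis elements
    (b : Module.Basis (Fin 12) K Λ)
    (hb0 : b 0 = e1) (hb1 : b 1 = e2) (hb2 : b 2 = α) (hb3 : b 3 = β)
    (hb4 : b 4 = σ) (hb5 : b 5 = γ) (hb6 : b 6 = α ^ 2) (hb7 : b 7 = α * σ)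
    (hb8 : b 8 = β ^ 2) (hb9 : b 9 = γ * α) (hb10 : b 10 = α ^ 3) (hb11 : b 11 = β ^ 3)
    -- the square root of μ
    (m : K) (hm : m ^ 2 = μ) :
    let KA : Submodule K Λ := Submodule.span K {x : Λ | ∃ u v : Λ, x = u * v - v * u}
    KA = Submodule.span K
      {σ, γ, α * σ, γ * α, γ * σ - σ * γ, γ * σ * β - σ * β * γ} ∧
    (α + m • β) ^ 2 ∈ KA := by
  intro KA
  -- mismatch machinery
  have Z12 : ∀ x y : Λ, x * e1 = x → e2 * y = y → x * y = 0 := by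
    intro x y hx hy
    rw [← hx, ← hy, mul_assoc, ← mul_assoc e1, h12, zero_mul, mul_zero]
  have Z21 : ∀ x y : Λ, x * e2 = x → e1 * y = y → x * y = 0 := by
    intro x y hx hy
    rw [← hx, ← hy, mul_assoc, ← mul_assoc e2, h21, zero_mul, mul_zero]
  have cancel : ∀ x : Λ, x = μ • x → x = 0 := by
    intro x hx
    have h1 : (1 - μ) ≠ 0 := sub_ne_zero_of_ne (Ne.symm hμ1)
    have h : (1 - μ) • x = 0 := by rw [sub_smul, one_smul, ← hx, sub_self]
    calc x = ((1 - μ)⁻¹ * (1 - μ)) • x := by rw [inv_mul_cancel₀ h1, one_smul]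
      _ = (1 - μ)⁻¹ • ((1 - μ) • x) := mul_smul _ _ _
      _ = 0 := by rw [h, smul_zero]
  -- oriented relation rewrites
  have hSG : σ * γ = α ^ 2 := r1.symm
  have hGS : γ * σ = μ • β ^ 2 := r2.symm
  have hBG : β * γ = γ * α := r3.symm
  -- power rewrites
  have s_AA2 : α * α ^ 2 = α ^ 3 := (pow_succ' α 2).symm
  have s_A2A : α ^ 2 * α = α ^ 3 := (pow_succ α 2).symm
  have s_BB2 : β * β ^ 2 = β ^ 3 := (pow_succ' β 2).symm
  have s_B2B : β ^ 2 * β = β ^ 3 := (pow_succ β 2).symm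
  -- absorption facts
  have a1 : e1 * α ^ 2 = α ^ 2 := by rw [pow_two, ← mul_assoc, hα1]
  have a2 : α ^ 2 * e1 = α ^ 2 := by rw [pow_two, mul_assoc, hα2]
  have a3 : e1 * α ^ 3 = α ^ 3 := by rw [← s_AA2, ← mul_assoc, hα1]
  have a4 : α ^ 3 * e1 = α ^ 3 := by rw [← s_A2A, mul_assoc, hα2]
  have a5 : e2 * β ^ 2 = β ^ 2 := by rw [pow_two, ← mul_assoc, hβ1]
  have a6 : β ^ 2 * e2 = β ^ 2 := by rw [pow_two, mul_assoc, hβ2]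
  have a7 : e2 * β ^ 3 = β ^ 3 := by rw [← s_BB2, ← mul_assoc, hβ1]
  have a8 : β ^ 3 * e2 = β ^ 3 := by rw [← s_B2B, mul_assoc, hβ2]
  have a9 : e1 * (α * σ) = α * σ := by rw [← mul_assoc, hα1]
  have a10 : (α * σ) * e2 = α * σ := by rw [mul_assoc, hσ2]
  have a11 : e2 * (γ * α) = γ * α := by rw [← mul_assoc, hγ1]
  have a12 : (γ * α) * e1 = γ * α := by rw [mul_assoc, hα2]
  -- key degenerate relations
  have hσβ2 : σ * β ^ 2 = α ^ 2 * σ := by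
    rw [pow_two β, pow_two α, ← mul_assoc, r4, mul_assoc, r4, ← mul_assoc]
  have d_A2S : α ^ 2 * σ = 0 := by
    apply cancel
    calc α ^ 2 * σ = σ * (γ * σ) := by rw [r1, mul_assoc]
      _ = σ * (μ • β ^ 2) := by rw [← r2]
      _ = μ • (σ * β ^ 2) := mul_smul_comm _ _ _
      _ = μ • (α ^ 2 * σ) := by rw [hσβ2]
  have hγα2 : γ * α ^ 2 = β ^ 2 * γ := by
    rw [pow_two α, pow_two β, ← mul_assoc, r3, mul_assoc, r3, ← mul_assoc]
  have d_B2G : β ^ 2 * γ = 0 := by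
    apply cancel
    calc β ^ 2 * γ = γ * (σ * γ) := by rw [← hγα2, r1]
      _ = (γ * σ) * γ := by rw [mul_assoc]
      _ = (μ • β ^ 2) * γ := by rw [← r2]
      _ = μ • (β ^ 2 * γ) := smul_mul_assoc _ _ _
  have s_GA2 : γ * α ^ 2 = 0 := hγα2.trans d_B2G
  have s_SB2 : σ * β ^ 2 = 0 := hσβ2.trans d_A2S
  -- fourth powers vanish
  have s_A2A2 : α ^ 2 * α ^ 2 = 0 := by
    calc α ^ 2 * α ^ 2 = (α ^ 2 * σ) * γ := by rw [r1, ← mul_assoc]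
      _ = 0 := by rw [d_A2S, zero_mul]
  have s_B2B2 : β ^ 2 * β ^ 2 = 0 := by
    have h4 : μ • (β ^ 2 * β ^ 2) = 0 := by
      calc μ • (β ^ 2 * β ^ 2) = β ^ 2 * (μ • β ^ 2) := (mul_smul_comm _ _ _).symm
        _ = (β ^ 2 * γ) * σ := by rw [r2, ← mul_assoc]
        _ = 0 := by rw [d_B2G, zero_mul]
    calc β ^ 2 * β ^ 2 = μ⁻¹ • (μ • (β ^ 2 * β ^ 2)) := by
          rw [smul_smul, inv_mul_cancel₀ hμ0, one_smul]
      _ = 0 := by rw [h4, smul_zero]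
  have s_A3A : α ^ 3 * α = 0 := by rw [← s_A2A, mul_assoc, ← pow_two, s_A2A2]
  have s_AA3 : α * α ^ 3 = 0 := by rw [← s_AA2, ← mul_assoc, ← pow_two, s_A2A2]
  have s_A3A2 : α ^ 3 * α ^ 2 = 0 := by rw [pow_two, ← mul_assoc, s_A3A, zero_mul]
  have s_A2A3 : α ^ 2 * α ^ 3 = 0 := by rw [← s_AA2, ← mul_assoc, s_A2A, s_A3A2]
  have s_A3A3 : α ^ 3 * α ^ 3 = 0 := by
    calc α ^ 3 * α ^ 3 = α ^ 3 * (α * α ^ 2) := by rw [s_AA2]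
      _ = (α ^ 3 * α) * α ^ 2 := by rw [mul_assoc]
      _ = 0 := by rw [s_A3A, zero_mul]
  have s_B3B : β ^ 3 * β = 0 := by rw [← s_B2B, mul_assoc, ← pow_two, s_B2B2]
  have s_BB3 : β * β ^ 3 = 0 := by rw [← s_BB2, ← mul_assoc, ← pow_two, s_B2B2]
  have s_B3B2 : β ^ 3 * β ^ 2 = 0 := by rw [pow_two, ← mul_assoc, s_B3B, zero_mul]
  have s_B2B3 : β ^ 2 * β ^ 3 = 0 := by rw [← s_BB2, ← mul_assoc, s_B2B, s_B3B2]
  have s_B3B3 : β ^ 3 * β ^ 3 = 0 := by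
    calc β ^ 3 * β ^ 3 = β ^ 3 * (β * β ^ 2) := by rw [s_BB2]
      _ = (β ^ 3 * β) * β ^ 2 := by rw [mul_assoc]
      _ = 0 := by rw [s_B3B, zero_mul]
  -- remaining products
  have s_A_AS : α * (α * σ) = 0 := by rw [← mul_assoc, ← pow_two, d_A2S]
  have s_A3S : α ^ 3 * σ = 0 := by rw [← s_AA2, mul_assoc, d_A2S, mul_zero]
  have s_A2_AS : α ^ 2 * (α * σ) = 0 := by rw [← mul_assoc, s_A2A, s_A3S]
  have s_A3_AS : α ^ 3 * (α * σ) = 0 := by rw [← mul_assoc, s_A3A, zero_mul]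
  have s_AS_B : (α * σ) * β = 0 := by rw [mul_assoc, r4, s_A_AS]
  have s_AS_B2 : (α * σ) * β ^ 2 = 0 := by rw [mul_assoc, s_SB2, mul_zero]
  have s_SB3 : σ * β ^ 3 = 0 := by rw [← s_BB2, ← mul_assoc, r4, mul_assoc, s_SB2, mul_zero]
  have s_AS_B3 : (α * σ) * β ^ 3 = 0 := by rw [mul_assoc, s_SB3, mul_zero]
  have s_AS_G : (α * σ) * γ = α ^ 3 := by rw [mul_assoc, hSG, s_AA2]
  have s_SGA : σ * (γ * α) = α ^ 3 := by rw [← mul_assoc, hSG, s_A2A]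
  have s_GAS : γ * (α * σ) = μ • β ^ 3 := by
    rw [← mul_assoc, r3, mul_assoc, hGS, mul_smul_comm, s_BB2]
  have s_GA_S : (γ * α) * σ = μ • β ^ 3 := by rw [mul_assoc, s_GAS]
  have s_GA3 : γ * α ^ 3 = 0 := by rw [← s_A2A, ← mul_assoc, s_GA2, zero_mul]
  have s_B_GA : β * (γ * α) = 0 := by rw [r3, ← mul_assoc, ← pow_two, d_B2G]
  have s_B3G : β ^ 3 * γ = 0 := by rw [← s_BB2, mul_assoc, d_B2G, mul_zero]
  have s_B2_GA : β ^ 2 * (γ * α) = 0 := by rw [r3, ← mul_assoc, s_B2B, s_B3G]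
  have s_B3_GA : β ^ 3 * (γ * α) = 0 := by rw [r3, ← mul_assoc, s_B3B, zero_mul]
  have s_GA_A : (γ * α) * α = 0 := by rw [mul_assoc, ← pow_two, s_GA2]
  have s_GA_A2 : (γ * α) * α ^ 2 = 0 := by rw [mul_assoc, s_AA2, s_GA3]
  have s_GA_A3 : (γ * α) * α ^ 3 = 0 := by rw [mul_assoc, s_AA3, mul_zero]
  have s_GA_AS : (γ * α) * (α * σ) = 0 := by rw [mul_assoc, s_A_AS, mul_zero]
  have s_AS_GA : (α * σ) * (γ * α) = 0 := by rw [mul_assoc, s_SGA, s_AA3]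
  -- all mismatch zero products
  have z1 : e1 * β = 0 := Z12 _ _ he1 hβ1
  have z2 : e1 * (β ^ 2) = 0 := Z12 _ _ he1 a5
  have z3 : e1 * (β ^ 3) = 0 := Z12 _ _ he1 a7
  have z4 : e1 * γ = 0 := Z12 _ _ he1 hγ1
  have z5 : e1 * (γ * α) = 0 := Z12 _ _ he1 a11
  have z6 : α * e2 = 0 := Z12 _ _ hα2 he2
  have z7 : α * β = 0 := Z12 _ _ hα2 hβ1
  have z8 : α * (β ^ 2) = 0 := Z12 _ _ hα2 a5
  have z9 : α * (β ^ 3) = 0 := Z12 _ _ hα2 a7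
  have z10 : α * γ = 0 := Z12 _ _ hα2 hγ1
  have z11 : α * (γ * α) = 0 := Z12 _ _ hα2 a11
  have z12 : (α ^ 2) * e2 = 0 := Z12 _ _ a2 he2
  have z13 : (α ^ 2) * β = 0 := Z12 _ _ a2 hβ1
  have z14 : (α ^ 2) * (β ^ 2) = 0 := Z12 _ _ a2 a5
  have z15 : (α ^ 2) * (β ^ 3) = 0 := Z12 _ _ a2 a7
  have z16 : (α ^ 2) * γ = 0 := Z12 _ _ a2 hγ1
  have z17 : (α ^ 2) * (γ * α) = 0 := Z12 _ _ a2 a11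
  have z18 : (α ^ 3) * e2 = 0 := Z12 _ _ a4 he2
  have z19 : (α ^ 3) * β = 0 := Z12 _ _ a4 hβ1
  have z20 : (α ^ 3) * (β ^ 2) = 0 := Z12 _ _ a4 a5
  have z21 : (α ^ 3) * (β ^ 3) = 0 := Z12 _ _ a4 a7
  have z22 : (α ^ 3) * γ = 0 := Z12 _ _ a4 hγ1
  have z23 : (α ^ 3) * (γ * α) = 0 := Z12 _ _ a4 a11
  have z24 : γ * e2 = 0 := Z12 _ _ hγ2 he2
  have z25 : γ * β = 0 := Z12 _ _ hγ2 hβ1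
  have z26 : γ * (β ^ 2) = 0 := Z12 _ _ hγ2 a5
  have z27 : γ * (β ^ 3) = 0 := Z12 _ _ hγ2 a7
  have z28 : γ * γ = 0 := Z12 _ _ hγ2 hγ1
  have z29 : γ * (γ * α) = 0 := Z12 _ _ hγ2 a11
  have z30 : (γ * α) * e2 = 0 := Z12 _ _ a12 he2
  have z31 : (γ * α) * β = 0 := Z12 _ _ a12 hβ1
  have z32 : (γ * α) * (β ^ 2) = 0 := Z12 _ _ a12 a5
  have z33 : (γ * α) * (β ^ 3) = 0 := Z12 _ _ a12 a7
  have z34 : (γ * α) * γ = 0 := Z12 _ _ a12 hγ1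
  have z35 : (γ * α) * (γ * α) = 0 := Z12 _ _ a12 a11
  have z36 : e2 * α = 0 := Z21 _ _ he2 hα1
  have z37 : e2 * (α ^ 2) = 0 := Z21 _ _ he2 a1
  have z38 : e2 * (α ^ 3) = 0 := Z21 _ _ he2 a3
  have z39 : e2 * σ = 0 := Z21 _ _ he2 hσ1
  have z40 : e2 * (α * σ) = 0 := Z21 _ _ he2 a9
  have z41 : β * e1 = 0 := Z21 _ _ hβ2 he1
  have z42 : β * α = 0 := Z21 _ _ hβ2 hα1
  have z43 : β * (α ^ 2) = 0 := Z21 _ _ hβ2 a1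
  have z44 : β * (α ^ 3) = 0 := Z21 _ _ hβ2 a3
  have z45 : β * σ = 0 := Z21 _ _ hβ2 hσ1
  have z46 : β * (α * σ) = 0 := Z21 _ _ hβ2 a9
  have z47 : (β ^ 2) * e1 = 0 := Z21 _ _ a6 he1
  have z48 : (β ^ 2) * α = 0 := Z21 _ _ a6 hα1
  have z49 : (β ^ 2) * (α ^ 2) = 0 := Z21 _ _ a6 a1
  have z50 : (β ^ 2) * (α ^ 3) = 0 := Z21 _ _ a6 a3
  have z51 : (β ^ 2) * σ = 0 := Z21 _ _ a6 hσ1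
  have z52 : (β ^ 2) * (α * σ) = 0 := Z21 _ _ a6 a9
  have z53 : (β ^ 3) * e1 = 0 := Z21 _ _ a8 he1
  have z54 : (β ^ 3) * α = 0 := Z21 _ _ a8 hα1
  have z55 : (β ^ 3) * (α ^ 2) = 0 := Z21 _ _ a8 a1
  have z56 : (β ^ 3) * (α ^ 3) = 0 := Z21 _ _ a8 a3
  have z57 : (β ^ 3) * σ = 0 := Z21 _ _ a8 hσ1
  have z58 : (β ^ 3) * (α * σ) = 0 := Z21 _ _ a8 a9
  have z59 : σ * e1 = 0 := Z21 _ _ hσ2 he1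
  have z60 : σ * α = 0 := Z21 _ _ hσ2 hα1
  have z61 : σ * (α ^ 2) = 0 := Z21 _ _ hσ2 a1
  have z62 : σ * (α ^ 3) = 0 := Z21 _ _ hσ2 a3
  have z63 : σ * σ = 0 := Z21 _ _ hσ2 hσ1
  have z64 : σ * (α * σ) = 0 := Z21 _ _ hσ2 a9
  have z65 : (α * σ) * e1 = 0 := Z21 _ _ a10 he1
  have z66 : (α * σ) * α = 0 := Z21 _ _ a10 hα1
  have z67 : (α * σ) * (α ^ 2) = 0 := Z21 _ _ a10 a1
  have z68 : (α * σ) * (α ^ 3) = 0 := Z21 _ _ a10 a3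
  have z69 : (α * σ) * σ = 0 := Z21 _ _ a10 hσ1
  have z70 : (α * σ) * (α * σ) = 0 := Z21 _ _ a10 a9
  -- the target span
  set SS : Submodule K Λ := Submodule.span K
      {σ, γ, α * σ, γ * α, γ * σ - σ * γ, γ * σ * β - σ * β * γ} with hSSdef
  have memσ : σ ∈ SS := Submodule.subset_span (by simp)
  have memγ : γ ∈ SS := Submodule.subset_span (by simp)
  have memAS : α * σ ∈ SS := Submodule.subset_span (by simp)
  have memGA : γ * α ∈ SS := Submodule.subset_span (by simp)
  have memC1 : γ * σ - σ * γ ∈ SS := Submodule.subset_span (by simp)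
  have memC2 : γ * σ * β - σ * β * γ ∈ SS := Submodule.subset_span (by simp)
  have memC1' : μ • β ^ 2 - α ^ 2 ∈ SS := by rwa [hGS, hSG] at memC1
  have memC2' : μ • β ^ 3 - α ^ 3 ∈ SS := by
    have h := memC2
    rw [hGS, r4, s_AS_G, smul_mul_assoc, s_B2B] at h
    exact h
  -- commutators of basis elements lie in SS
  have hbm0 : b ⟨0, by norm_num⟩ = e1 := hb0
  have hbm1 : b ⟨1, by norm_num⟩ = e2 := hb1
  have hbm2 : b ⟨2, by norm_num⟩ = α := hb2
  have hbm3 : b ⟨3, by norm_num⟩ = β := hb3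
  have hbm4 : b ⟨4, by norm_num⟩ = σ := hb4
  have hbm5 : b ⟨5, by norm_num⟩ = γ := hb5
  have hbm6 : b ⟨6, by norm_num⟩ = α ^ 2 := hb6
  have hbm7 : b ⟨7, by norm_num⟩ = α * σ := hb7
  have hbm8 : b ⟨8, by norm_num⟩ = β ^ 2 := hb8
  have hbm9 : b ⟨9, by norm_num⟩ = γ * α := hb9
  have hbm10 : b ⟨10, by norm_num⟩ = α ^ 3 := hb10
  have hbm11 : b ⟨11, by norm_num⟩ = β ^ 3 := hb11
  have key : ∀ i j : Fin 12, b i * b j - b j * b i ∈ SS := by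
    intro i j
    fin_cases i <;> fin_cases j <;>
      simp only [hbm0, hbm1, hbm2, hbm3, hbm4, hbm5, hbm6, hbm7, hbm8, hbm9, hbm10, hbm11,
        he1, he2, h12, h21, hα1, hα2, hβ1, hβ2, hσ1, hσ2, hγ1, hγ2,
        hSG, hGS, hBG, r4, s_AA2, s_A2A, s_BB2, s_B2B, a1, a2, a3, a4, a5, a6, a7, a8,
        a9, a10, a11, a12, d_A2S, d_B2G, s_GA2, s_SB2, s_A2A2, s_B2B2, s_A3A, s_AA3,
        s_A3A2, s_A2A3, s_A3A3, s_B3B, s_BB3, s_B3B2, s_B2B3, s_B3B3, s_A_AS, s_A3S,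
        s_A2_AS, s_A3_AS, s_AS_B, s_AS_B2, s_SB3, s_AS_B3, s_AS_G, s_SGA, s_GAS,
        s_GA_S, s_GA3, s_B_GA, s_B3G, s_B2_GA, s_B3_GA, s_GA_A, s_GA_A2, s_GA_A3,
        s_GA_AS, s_AS_GA,
        z1, z2, z3, z4, z5, z6, z7, z8, z9, z10, z11, z12, z13, z14, z15, z16, z17, z18, z19, z20, z21, z22, z23, z24, z25, z26, z27, z28, z29, z30, z31, z32, z33, z34, z35, z36, z37, z38, z39, z40, z41, z42, z43, z44, z45, z46, z47, z48, z49, z50, z51, z52, z53, z54, z55, z56, z57, z58, z59, z60, z61, z62, z63, z64, z65, z66, z67, z68, z69, z70,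
        sub_self, sub_zero, zero_sub] <;>
      first
        | exact zero_mem _
        | exact memσ
        | exact memγ
        | exact memAS
        | exact memGA
        | exact memC1'
        | exact memC2'
        | exact neg_mem memσ
        | exact neg_mem memγ
        | exact neg_mem memAS
        | exact neg_mem memGA
        | (rw [← neg_sub]; exact neg_mem memC1')
        | (rw [← neg_sub]; exact neg_mem memC2')
  have key2 : ∀ (i : Fin 12) (y : Λ), b i * y - y * b i ∈ SS := by
    intro i y
    rw [← b.sum_repr y, Finset.mul_sum, Finset.sum_mul, ← Finset.sum_sub_distrib]
    refine Submodule.sum_mem _ fun j _ => ?_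
    rw [mul_smul_comm, smul_mul_assoc, ← smul_sub]
    exact Submodule.smul_mem _ _ (key i j)
  have keyAll : ∀ u v : Λ, u * v - v * u ∈ SS := by
    intro u v
    rw [← b.sum_repr u, Finset.sum_mul, Finset.mul_sum, ← Finset.sum_sub_distrib]
    refine Submodule.sum_mem _ fun i _ => ?_
    rw [smul_mul_assoc, mul_smul_comm, ← smul_sub]
    exact Submodule.smul_mem _ _ (key2 i v)
  have hKAS : KA = SS := by
    apply le_antisymm
    · apply Submodule.span_le.mpr
      rintro x ⟨u, v, rfl⟩
      exact keyAll u v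
    · apply Submodule.span_le.mpr
      intro x hx
      simp only [Set.mem_insert_iff, Set.mem_singleton_iff] at hx
      rcases hx with h | h | h | h | h | h <;> rw [h]
      · exact Submodule.subset_span ⟨e1, σ, by rw [hσ1, z59, sub_zero]⟩
      · exact Submodule.subset_span ⟨e2, γ, by rw [hγ1, z24, sub_zero]⟩
      · exact Submodule.subset_span ⟨e1, α * σ, by rw [a9, z65, sub_zero]⟩
      · exact Submodule.subset_span ⟨e2, γ * α, by rw [a11, z30, sub_zero]⟩
      · exact Submodule.subset_span ⟨γ, σ, rfl⟩
      · have h2 : γ * (σ * β) - (σ * β) * γ ∈ KA := Submodule.subset_span ⟨γ, σ * β, rfl⟩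
        rwa [← mul_assoc] at h2
  refine ⟨hKAS, ?_⟩
  have negK : ∀ x : Λ, -x = x := by
    intro x
    rw [← neg_one_smul K x, show (-1 : K) = 1 from CharTwo.neg_eq 1, one_smul]
  have expand : (α + m • β) ^ 2 = γ * σ - σ * γ := by
    rw [pow_two, add_mul, mul_add, mul_add]
    rw [mul_smul_comm, z7, smul_zero, smul_mul_assoc, z42, smul_zero]
    rw [smul_mul_assoc, mul_smul_comm, smul_smul, ← pow_two m, hm]
    rw [← pow_two α, ← pow_two β, r1, r2 ]
    rw [sub_eq_add_neg, negK, add_zero, zero_add, add_comm]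
  rw [expand]
  exact Submodule.subset_span ⟨γ, σ, rfl⟩
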